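/- Let F, k_f, ρ be positive integers with k_f ≤ F/2 and ρ ≤ F/(2·k_f), let α ∈ [0,1], and for x ∈ {1,…,k_f} define h_x = Σ_{ℓ=0}^{x} C(x,ℓ)·α^ℓ·(1−α)^{x−ℓ}·(1 − C(F−ℓ−1, ρ−1)/C(F, ρ)). Then h_x ≤ (1 − ρ/F) + α·ρ/F. -/

import Mathlib

lemma aux_choose_diff (F ρ : ℕ) (hρ : 2 ≤ ρ) :
    ∀ ℓ, ℓ + ρ ≤ F →
      (F - 1).choose (ρ - 1) ≤ (F - ℓ - 1).choose (ρ - 1) + ℓ * (F - 2).choose (ρ - 2) := by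
  intro ℓ
  induction ℓ with
  | zero => simp
  | succ n ih =>
    intro h
    have h1 : n + ρ ≤ F := by omega
    have pascal : (F - n - 1).choose (ρ - 1)
        = (F - n - 2).choose (ρ - 2) + (F - n - 2).choose (ρ - 1) := by
      have e1 : F - n - 1 = (F - n - 2) + 1 := by omega
      have e2 : ρ - 1 = (ρ - 2) + 1 := by omega
      rw [e1, e2, Nat.choose_succ_succ]
    have hmono : (F - n - 2).choose (ρ - 2) ≤ (F - 2).choose (ρ - 2) :=
      Nat.choose_le_choose _ (by omega)
    have e3 : F - (n + 1) - 1 = F - n - 2 := by omega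
    calc (F - 1).choose (ρ - 1) ≤ (F - n - 1).choose (ρ - 1) + n * (F - 2).choose (ρ - 2) :=
          ih h1
      _ = (F - n - 2).choose (ρ - 1) + ((F - n - 2).choose (ρ - 2)
            + n * (F - 2).choose (ρ - 2)) := by rw [pascal]; ring
      _ ≤ (F - (n + 1) - 1).choose (ρ - 1) + (n + 1) * (F - 2).choose (ρ - 2) := by
          rw [e3, Nat.succ_mul]; omega

lemma binom_mean (a b : ℝ) (m : ℕ) :
    ∑ ℓ ∈ Finset.range (m + 2), (ℓ : ℝ) * ((m + 1).choose ℓ : ℝ) * a ^ ℓ * b ^ (m + 1 - ℓ)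
      = (m + 1 : ℝ) * a * (a + b) ^ m := by
  rw [Finset.sum_range_succ']
  simp only [Nat.cast_zero, zero_mul, pow_zero, add_zero]
  have hstep : ∀ j ∈ Finset.range (m + 1),
      ((j + 1 : ℕ) : ℝ) * ((m + 1).choose (j + 1) : ℝ) * a ^ (j + 1) * b ^ (m + 1 - (j + 1))
        = (m + 1 : ℝ) * a * ((m.choose j : ℝ) * a ^ j * b ^ (m - j)) := by
    intro j hj
    have key : (m + 1) * m.choose j = (m + 1).choose (j + 1) * (j + 1) :=
      Nat.add_one_mul_choose_eq m j
    have keyR : ((m : ℝ) + 1) * (m.choose j : ℝ) = ((m + 1).choose (j + 1) : ℝ) * ((j : ℝ) + 1) := by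
      exact_mod_cast key
    have e : m + 1 - (j + 1) = m - j := by omega
    rw [e]
    push_cast
    linear_combination (-(a ^ (j + 1) * b ^ (m - j))) * keyR
  rw [Finset.sum_congr rfl hstep, ← Finset.mul_sum]
  congr 1
  rw [add_pow a b m]
  exact Finset.sum_congr rfl fun k _ => by ring

set_option maxHeartbeats 1600000 in
theorem stmt_2 (F kf ρ : ℕ) (hF : 0 < F) (hkf : 0 < kf) (hρ : 0 < ρ)
    (hkfF : (kf : ℝ) ≤ F / 2) (hρF : (ρ : ℝ) ≤ (F : ℝ) / (2 * kf))
    (α : ℝ) (hα0 : 0 ≤ α) (hα1 : α ≤ 1)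
    (x : ℕ) (hx1 : 1 ≤ x) (hxkf : x ≤ kf) :
    ∑ ℓ ∈ Finset.range (x + 1),
      (x.choose ℓ : ℝ) * α ^ ℓ * (1 - α) ^ (x - ℓ) *
        (1 - ((F - ℓ - 1).choose (ρ - 1) : ℝ) / (F.choose ρ : ℝ))
      ≤ (1 - (ρ : ℝ) / F) + α * ρ / F := by
  have hFR : (0:ℝ) < F := by exact_mod_cast hF
  have hkfR : (0:ℝ) < kf := by exact_mod_cast hkf
  have h2kρR : (ρ : ℝ) * (2 * kf) ≤ F := (le_div_iff₀ (by positivity)).mp hρF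
  have h2kρ : 2 * kf * ρ ≤ F := by
    have : ((2 * kf * ρ : ℕ) : ℝ) ≤ (F : ℝ) := by push_cast; nlinarith
    exact_mod_cast this
  have hkfρ1 : kf ≤ kf * ρ := Nat.le_mul_of_pos_right _ hρ
  have hkfρ2 : ρ ≤ kf * ρ := Nat.le_mul_of_pos_left _ hkf
  have hxρF : x + ρ ≤ F := by
    have h2 : 2 * (kf * ρ) ≤ F := by rw [← mul_assoc]; exact h2kρ
    omega
  have hρleF : ρ ≤ F := by omega
  have hF2 : 2 ≤ F := by omega
  have hF1R : (1:ℝ) < F := by exact_mod_cast hF2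
  have hC : (0:ℝ) < (F.choose ρ : ℝ) := by exact_mod_cast Nat.choose_pos hρleF
  have hsum1 : ∑ ℓ ∈ Finset.range (x + 1),
      (x.choose ℓ : ℝ) * α ^ ℓ * (1 - α) ^ (x - ℓ) = 1 := by
    calc ∑ ℓ ∈ Finset.range (x + 1), (x.choose ℓ : ℝ) * α ^ ℓ * (1 - α) ^ (x - ℓ)
        = ∑ ℓ ∈ Finset.range (x + 1), α ^ ℓ * (1 - α) ^ (x - ℓ) * (x.choose ℓ : ℝ) :=
          Finset.sum_congr rfl fun k _ => by ring
      _ = (α + (1 - α)) ^ x := (add_pow α (1 - α) x).symm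
      _ = 1 := by norm_num
  have hsum2 : ∑ ℓ ∈ Finset.range (x + 1),
      (ℓ : ℝ) * (x.choose ℓ : ℝ) * α ^ ℓ * (1 - α) ^ (x - ℓ) = (x : ℝ) * α := by
    obtain ⟨m, rfl⟩ : ∃ m, x = m + 1 := ⟨x - 1, by omega⟩
    have h := binom_mean α (1 - α) m
    have e : α + (1 - α) = 1 := by ring
    rw [e, one_pow, mul_one] at h
    have ecast : ((m + 1 : ℕ) : ℝ) = (m : ℝ) + 1 := by push_cast; ring
    rw [ecast]
    exact h
  obtain ⟨c, hc⟩ : ∃ c : ℝ, c = (ρ : ℝ) * ((ρ : ℝ) - 1) / ((F : ℝ) * ((F : ℝ) - 1)) :=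
    ⟨_, rfl⟩
  have eq1 : (F : ℝ) * ((F - 1).choose (ρ - 1) : ℝ) = (F.choose ρ : ℝ) * ρ := by
    have h := Nat.add_one_mul_choose_eq (F - 1) (ρ - 1)
    have e1 : F - 1 + 1 = F := by omega
    have e2 : ρ - 1 + 1 = ρ := by omega
    rw [e1, e2] at h
    exact_mod_cast h
  have hρ1R : (1:ℝ) ≤ ρ := by exact_mod_cast hρ
  have hcnonneg : 0 ≤ c := by
    rw [hc]; apply div_nonneg <;> nlinarith
  have hterm : ∀ ℓ ∈ Finset.range (x + 1),
      (x.choose ℓ : ℝ) * α ^ ℓ * (1 - α) ^ (x - ℓ) *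
        (1 - ((F - ℓ - 1).choose (ρ - 1) : ℝ) / (F.choose ρ : ℝ))
      ≤ (x.choose ℓ : ℝ) * α ^ ℓ * (1 - α) ^ (x - ℓ) * ((1 - (ρ:ℝ)/F) + ℓ * c) := by
    intro ℓ hℓ
    have hℓx : ℓ ≤ x := by simpa [Finset.mem_range, Nat.lt_succ_iff] using hℓ
    have hw : (0:ℝ) ≤ (x.choose ℓ : ℝ) * α ^ ℓ * (1 - α) ^ (x - ℓ) := by
      have : (0:ℝ) ≤ 1 - α := by linarith
      positivity
    apply mul_le_mul_of_nonneg_left _ hw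
    have hℓρ : ℓ + ρ ≤ F := by omega
    have hℓ0 : (0:ℝ) ≤ (ℓ:ℝ) := by positivity
    rcases Nat.lt_or_ge ρ 2 with hρ1 | hρ2
    · have hρe : ρ = 1 := by omega
      subst hρe
      have hc0 : c = 0 := by rw [hc]; push_cast; ring
      have h1 : ((F - ℓ - 1).choose (1 - 1) : ℝ) = 1 := by norm_num
      have h2 : ((F.choose 1 : ℕ) : ℝ) = F := by rw [Nat.choose_one_right]
      rw [hc0, h1, h2]
      push_cast
      linarith
    · have eq2 : (F : ℝ) * ((F : ℝ) - 1) * ((F - 2).choose (ρ - 2) : ℝ)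
          = (F.choose ρ : ℝ) * ((ρ : ℝ) * ((ρ : ℝ) - 1)) := by
        have h2 := Nat.add_one_mul_choose_eq (F - 2) (ρ - 2)
        have e1 : F - 2 + 1 = F - 1 := by omega
        have e2 : ρ - 2 + 1 = ρ - 1 := by omega
        rw [e1, e2] at h2
        have c1 : ((F - 1 : ℕ) : ℝ) = (F:ℝ) - 1 := by
          push_cast [Nat.cast_sub (by omega : 1 ≤ F)]; ring
        have c2 : ((ρ - 1 : ℕ) : ℝ) = (ρ:ℝ) - 1 := by
          push_cast [Nat.cast_sub (by omega : 1 ≤ ρ)]; ring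
        have h2R : ((F:ℝ) - 1) * ((F - 2).choose (ρ - 2) : ℝ)
            = ((F - 1).choose (ρ - 1) : ℝ) * ((ρ:ℝ) - 1) := by
          calc ((F:ℝ) - 1) * ((F - 2).choose (ρ - 2) : ℝ)
              = ((F - 1 : ℕ) : ℝ) * ((F - 2).choose (ρ - 2) : ℝ) := by rw [c1]
            _ = ((F - 1).choose (ρ - 1) : ℝ) * ((ρ - 1 : ℕ) : ℝ) := by exact_mod_cast h2
            _ = ((F - 1).choose (ρ - 1) : ℝ) * ((ρ:ℝ) - 1) := by rw [c2]
        linear_combination (F:ℝ) * h2R + ((ρ:ℝ) - 1) * eq1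
      have hnatR : ((F - 1).choose (ρ - 1) : ℝ)
          ≤ ((F - ℓ - 1).choose (ρ - 1) : ℝ) + (ℓ : ℝ) * ((F - 2).choose (ρ - 2) : ℝ) := by
        exact_mod_cast aux_choose_diff F ρ hρ2 ℓ hℓρ
      have eqA : (ρ:ℝ)/F * (F.choose ρ : ℝ) = ((F - 1).choose (ρ - 1) : ℝ) := by
        field_simp
        linear_combination -eq1
      have hden : ((F:ℝ) * ((F:ℝ) - 1)) ≠ 0 := by nlinarith
      have eqD : c * (F.choose ρ : ℝ) = ((F - 2).choose (ρ - 2) : ℝ) := by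
        rw [hc, div_mul_eq_mul_div, div_eq_iff hden]
        linear_combination -eq2
      have e3 : ((ρ:ℝ)/F - (ℓ:ℝ) * c) * (F.choose ρ : ℝ)
          = ((F - 1).choose (ρ - 1) : ℝ) - (ℓ:ℝ) * ((F - 2).choose (ρ - 2) : ℝ) := by
        linear_combination eqA - (ℓ:ℝ) * eqD
      have key : (ρ:ℝ)/F - (ℓ:ℝ) * c ≤ ((F - ℓ - 1).choose (ρ - 1) : ℝ) / (F.choose ρ : ℝ) := by
        rw [le_div_iff₀ hC, e3]
        linarith [hnatR]
      linarith
  calc ∑ ℓ ∈ Finset.range (x + 1),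
      (x.choose ℓ : ℝ) * α ^ ℓ * (1 - α) ^ (x - ℓ) *
        (1 - ((F - ℓ - 1).choose (ρ - 1) : ℝ) / (F.choose ρ : ℝ))
      ≤ ∑ ℓ ∈ Finset.range (x + 1),
        (x.choose ℓ : ℝ) * α ^ ℓ * (1 - α) ^ (x - ℓ) * ((1 - (ρ:ℝ)/F) + ℓ * c) :=
        Finset.sum_le_sum hterm
    _ = (1 - (ρ:ℝ)/F) * (∑ ℓ ∈ Finset.range (x + 1),
          (x.choose ℓ : ℝ) * α ^ ℓ * (1 - α) ^ (x - ℓ))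
        + c * ∑ ℓ ∈ Finset.range (x + 1),
          (ℓ : ℝ) * (x.choose ℓ : ℝ) * α ^ ℓ * (1 - α) ^ (x - ℓ) := by
        rw [Finset.mul_sum, Finset.mul_sum, ← Finset.sum_add_distrib]
        exact Finset.sum_congr rfl fun k _ => by ring
    _ = (1 - (ρ:ℝ)/F) + c * ((x : ℝ) * α) := by rw [hsum1, hsum2, mul_one]
    _ ≤ (1 - (ρ:ℝ)/F) + α * ρ / F := by
        have hxρ : (x:ℝ) * ρ ≤ (F:ℝ) / 2 := by
          have hxkfR : (x:ℝ) ≤ kf := by exact_mod_cast hxkf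
          have hρR : (0:ℝ) ≤ ρ := by positivity
          nlinarith
        have hx1R : (1:ℝ) ≤ x := by exact_mod_cast hx1
        have hkey : c * ((x:ℝ) * α) ≤ α * ρ / F := by
          have hden : (0:ℝ) < (F:ℝ) * ((F:ℝ) - 1) := by nlinarith
          rw [hc, div_mul_eq_mul_div, div_le_div_iff₀ hden hFR]
          have hxρ1 : (x:ℝ) * ((ρ:ℝ) - 1) ≤ (F:ℝ) - 1 := by nlinarith
          nlinarith [mul_nonneg hα0 (by nlinarith : (0:ℝ) ≤ (ρ:ℝ) * ((F:ℝ) - 1 - (x:ℝ)*((ρ:ℝ)-1)))]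
        linarith
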